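/- Let f : E → ℝ be differentiable, L-smooth, and μ-strongly convex with 0 < μ ≤ L, and let x* ∈ E be a global minimizer of f. Let x : ℕ → E be the gradient descent sequence with constant step size λ = 1/L starting from x_0. Then for every n ≥ 1, ‖x_n - x*‖ ≤ (1 - μ/L)^{n/2}·‖x_0 - x*‖ (equivalently, ‖x_n - x*‖² ≤ (1 - μ/L)^n·‖x_0 - x*‖²). -/

import Mathlib

open RealInnerProductSpace

private lemma descent_lemma {E : Type*} [NormedAddCommGroup E]
    [InnerProductSpace ℝ E] [CompleteSpace E]
    (f : E → ℝ) (f' : E → E) (L : ℝ) (hL : 0 < L)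
    (hdiff : ∀ x, HasGradientAt f (f' x) x)
    (hsmooth : ∀ x y, ‖f' x - f' y‖ ≤ L * ‖x - y‖)
    (x y : E) : f y ≤ f x + ⟪f' x, y - x⟫ + L / 2 * ‖y - x‖ ^ 2 := by
  set v := y - x with hv
  have hγ : ∀ t : ℝ, HasDerivAt (fun t : ℝ => x + t • v) v t := by
    intro t
    simpa using ((hasDerivAt_id t).smul_const v).const_add x
  have hφ : ∀ t : ℝ, HasDerivAt (fun t : ℝ => f (x + t • v)) ⟪f' (x + t • v), v⟫ t := by
    intro t
    have h1 := (hdiff (x + t • v)).hasFDerivAt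
    have := h1.comp_hasDerivAt t (hγ t)
    simp at this; exact this
  have hf'cont : Continuous f' := by
    have : LipschitzWith (Real.toNNReal L) f' := by
      apply LipschitzWith.of_dist_le_mul
      intro a b
      rw [dist_eq_norm, dist_eq_norm]
      calc ‖f' a - f' b‖ ≤ L * ‖a - b‖ := hsmooth a b
        _ ≤ (Real.toNNReal L : ℝ) * ‖a - b‖ := by
            gcongr; exact (Real.le_coe_toNNReal L)
    exact this.continuous
  have hcont : Continuous fun t : ℝ => ⟪f' (x + t • v), v⟫ := by
    apply Continuous.inner
    · exact hf'cont.comp (by continuity)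
    · exact continuous_const
  have hftc : ∫ t in (0:ℝ)..1, ⟪f' (x + t • v), v⟫ = f (x + (1:ℝ) • v) - f (x + (0:ℝ) • v) := by
    exact intervalIntegral.integral_eq_sub_of_hasDerivAt (fun t _ => hφ t)
      (hcont.intervalIntegrable 0 1)
  have hbound : ∀ t ∈ Set.Icc (0:ℝ) 1,
      ⟪f' (x + t • v), v⟫ ≤ ⟪f' x, v⟫ + L * ‖v‖ ^ 2 * t := by
    intro t ht
    have h1 : ⟪f' (x + t • v) - f' x, v⟫ ≤ ‖f' (x + t • v) - f' x‖ * ‖v‖ :=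
      real_inner_le_norm _ _
    have h2 : ‖f' (x + t • v) - f' x‖ ≤ L * ‖t • v‖ := by
      simpa using hsmooth (x + t • v) x
    have h3 : ‖t • v‖ = t * ‖v‖ := by
      rw [norm_smul, Real.norm_eq_abs, abs_of_nonneg ht.1]
    have h4 : ⟪f' (x + t • v) - f' x, v⟫ = ⟪f' (x + t • v), v⟫ - ⟪f' x, v⟫ := by
      rw [inner_sub_left]
    rw [h3] at h2
    nlinarith [mul_le_mul_of_nonneg_right h2 (norm_nonneg v), norm_nonneg v]
  have hint : ∫ t in (0:ℝ)..1, ⟪f' (x + t • v), v⟫ ≤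
      ∫ t in (0:ℝ)..1, (⟪f' x, v⟫ + L * ‖v‖ ^ 2 * t) := by
    apply intervalIntegral.integral_mono_on (by norm_num)
      (hcont.intervalIntegrable 0 1)
      ((by continuity : Continuous fun t : ℝ => ⟪f' x, v⟫ + L * ‖v‖ ^ 2 * t).intervalIntegrable 0 1)
    exact hbound
  have hval : ∫ t in (0:ℝ)..1, (⟪f' x, v⟫ + L * ‖v‖ ^ 2 * t) = ⟪f' x, v⟫ + L * ‖v‖ ^ 2 / 2 := by
    rw [intervalIntegral.integral_add (f := fun _ => ⟪f' x, v⟫) (g := fun t => L * ‖v‖ ^ 2 * t) (intervalIntegrable_const)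
      ((continuous_const.mul continuous_id').intervalIntegrable 0 1),
      intervalIntegral.integral_const_mul, integral_id]
    simp
    ring
  have : f y - f x ≤ ⟪f' x, v⟫ + L * ‖v‖ ^ 2 / 2 := by
    have h0 : x + (0:ℝ) • v = x := by simp
    have h1 : x + (1:ℝ) • v = y := by simp [hv]
    rw [h0, h1] at hftc
    linarith [hint.trans_eq hval, hftc.symm.le, hftc.le]
  linarith

theorem gd_strongly_convex_linear_rate {E : Type*} [NormedAddCommGroup E]
    [InnerProductSpace ℝ E] [CompleteSpace E]
    (f : E → ℝ) (f' : E → E) (L μ : ℝ) (hμ : 0 < μ) (hμL : μ ≤ L)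
    (hdiff : ∀ x, HasGradientAt f (f' x) x)
    (hsmooth : ∀ x y, ‖f' x - f' y‖ ≤ L * ‖x - y‖)
    (hstrong : ∀ x y, f x + ⟪f' x, y - x⟫ + (μ / 2) * ‖y - x‖ ^ 2 ≤ f y)
    (xstar : E) (hmin : ∀ y, f xstar ≤ f y)
    (x : ℕ → E)
    (hiter : ∀ k, x (k + 1) = x k - (1 / L) • f' (x k)) :
    ∀ n : ℕ, 1 ≤ n →
      ‖x n - xstar‖ ≤ (1 - μ / L) ^ ((n : ℝ) / 2) * ‖x 0 - xstar‖ ∧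
      ‖x n - xstar‖ ^ 2 ≤ (1 - μ / L) ^ n * ‖x 0 - xstar‖ ^ 2 := by
  have hL : 0 < L := lt_of_lt_of_le hμ hμL
  -- one-step contraction
  have step : ∀ k, ‖x (k+1) - xstar‖ ^ 2 ≤ (1 - μ / L) * ‖x k - xstar‖ ^ 2 := by
    intro k
    set g := f' (x k) with hg
    set r := x k - xstar with hr
    -- (A) strong convexity at (x k, xstar)
    have hA : f (x k) - f xstar + μ / 2 * ‖r‖ ^ 2 ≤ ⟪g, r⟫ := by
      have h := hstrong (x k) xstar
      have h1 : ⟪g, xstar - x k⟫ = -⟪g, r⟫ := by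
        rw [hr, ← inner_neg_right]; congr 1; abel
      have h2 : ‖xstar - x k‖ = ‖r‖ := by rw [hr, ← norm_neg]; congr 1; abel
      rw [h1, h2] at h
      linarith
    -- (B) descent lemma at x k with step -g/L
    have hB : ‖g‖ ^ 2 / (2 * L) ≤ f (x k) - f xstar := by
      have h := descent_lemma f f' L hL hdiff hsmooth (x k) (x (k+1))
      rw [hiter k] at h
      rw [← hg] at h
      have h1 : x k - (1 / L) • g - x k = -((1/L) • g) := by abel
      rw [h1] at h
      have h2 : ⟪g, -((1/L) • g)⟫ = -(1/L) * ‖g‖^2 := by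
        rw [inner_neg_right, real_inner_smul_right, real_inner_self_eq_norm_sq]; ring
      have h3 : ‖-((1/L) • g)‖ ^ 2 = (1/L)^2 * ‖g‖^2 := by
        rw [norm_neg, norm_smul, Real.norm_eq_abs,
          abs_of_pos (by positivity : (0:ℝ) < 1/L)]
        ring
      rw [h2, h3] at h
      have h4 := hmin (x (k+1))
      rw [hiter k, ← hg] at h4
      have h5 : f xstar ≤ f (x k) + -(1/L) * ‖g‖^2 + L/2 * ((1/L)^2 * ‖g‖^2) := h4.trans h
      have he : f (x k) + -(1/L) * ‖g‖^2 + L/2 * ((1/L)^2 * ‖g‖^2)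
          = f (x k) - ‖g‖^2 / (2*L) := by field_simp; ring
      rw [he] at h5
      linarith
    -- expand the square
    have hexp : ‖x (k+1) - xstar‖ ^ 2 = ‖r‖^2 - 2 * (1/L) * ⟪g, r⟫ + (1/L)^2 * ‖g‖^2 := by
      have h1 : x (k+1) - xstar = r - (1/L) • g := by rw [hiter k, hr]; abel
      rw [h1, norm_sub_sq_real, real_inner_smul_right, norm_smul, Real.norm_eq_abs,
        abs_of_pos (by positivity : (0:ℝ) < 1/L), real_inner_comm]
      ring
    rw [hexp]
    have hI : ‖g‖^2/(2*L) + μ/2 * ‖r‖^2 ≤ ⟪g, r⟫ := by linarith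
    have hmono : 2*(1/L)*(‖g‖^2/(2*L) + μ/2*‖r‖^2) ≤ 2*(1/L)*⟪g, r⟫ := by
      have : (0:ℝ) ≤ 2*(1/L) := by positivity
      exact mul_le_mul_of_nonneg_left hI this
    have hid : ‖r‖^2 - 2*(1/L)*(‖g‖^2/(2*L) + μ/2*‖r‖^2) + (1/L)^2*‖g‖^2
        = (1 - μ/L)*‖r‖^2 := by field_simp; ring
    linarith
  -- squared-norm bound by induction
  have hc : (0:ℝ) ≤ 1 - μ / L := by
    have : μ / L ≤ 1 := (div_le_one hL).mpr hμL
    linarith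
  have sq_bound : ∀ n : ℕ, ‖x n - xstar‖ ^ 2 ≤ (1 - μ / L) ^ n * ‖x 0 - xstar‖ ^ 2 := by
    intro n
    induction n with
    | zero => simp
    | succ k ih =>
      calc ‖x (k+1) - xstar‖ ^ 2 ≤ (1 - μ/L) * ‖x k - xstar‖^2 := step k
        _ ≤ (1 - μ/L) * ((1 - μ/L)^k * ‖x 0 - xstar‖^2) := by gcongr
        _ = (1 - μ/L)^(k+1) * ‖x 0 - xstar‖^2 := by ring
  intro n _
  refine ⟨?_, sq_bound n⟩
  have h1 : (1 - μ/L) ^ ((n:ℝ)/2) = Real.sqrt ((1 - μ/L)^n) := by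
    rw [Real.sqrt_eq_rpow, ← Real.rpow_natCast (1 - μ/L) n, ← Real.rpow_mul hc]
    congr 1
    ring
  have h2 : ‖x n - xstar‖ = Real.sqrt (‖x n - xstar‖ ^ 2) :=
    (Real.sqrt_sq (norm_nonneg _)).symm
  rw [h1, h2]
  calc Real.sqrt (‖x n - xstar‖ ^ 2) ≤ Real.sqrt ((1 - μ/L)^n * ‖x 0 - xstar‖^2) :=
        Real.sqrt_le_sqrt (sq_bound n)
    _ = Real.sqrt ((1 - μ/L)^n) * ‖x 0 - xstar‖ := by
        rw [Real.sqrt_mul (by positivity), Real.sqrt_sq (norm_nonneg _)]
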